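/- For positive semidefinite sesquilinear forms realized by commuting bounded positive operators A, B on a Hilbert space with A + B = I, the 2x2 block form [[α, γ],[γ, β]] is positive if and only if |γ(x,y)|² ≤ α(x,x)·β(y,y) for all vectors x, y. Concretely: for positive sesquilinear forms α, β, γ on a complex vector space V, the block sesquilinear form Γ((x₁,x₂),(y₁,y₂)) = α(x₁,y₁) + γ(x₂,y₁) + γ(x₁,y₂) + β(x₂,y₂) is positive semidefinite on V × V if and only if |γ(x,y)|² ≤ α(x,x)β(y,y) for all x,y ∈ V. -/

import Mathlib

open scoped ComplexOrder

/-- A sesquilinear form with nonnegative (hence real) diagonal is Hermitian. -/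
lemma herm_of_pos {V : Type*} [AddCommGroup V] [Module ℂ V]
    (γ : V →ₗ[ℂ] V →ₗ⋆[ℂ] ℂ) (hγ : ∀ x, 0 ≤ γ x x) (x y : V) :
    γ y x = starRingEnd ℂ (γ x y) := by
  have him : ∀ z : V, (γ z z).im = 0 := fun z => ((Complex.nonneg_iff.mp (hγ z)).2).symm
  have e1 : γ (x + y) (x + y) = γ x x + γ x y + γ y x + γ y y := by
    simp only [map_add, LinearMap.add_apply]; ring
  have e2 : γ (x + Complex.I • y) (x + Complex.I • y) =
      γ x x + (-Complex.I) * γ x y + Complex.I * γ y x + γ y y := by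
    simp only [map_add, map_smul, LinearMap.add_apply, LinearMap.smul_apply,
      LinearMap.map_smulₛₗ, Complex.conj_I, smul_eq_mul]
    linear_combination (-(γ y y : ℂ)) * Complex.I_sq
  have h1 : (γ x y).im + (γ y x).im = 0 := by
    have := him (x + y)
    rw [e1] at this
    simp only [Complex.add_im, him x, him y] at this
    linarith
  have h2 : -(γ x y).re + (γ y x).re = 0 := by
    have := him (x + Complex.I • y)
    rw [e2] at this
    simp only [Complex.add_im, Complex.mul_im, Complex.neg_re, Complex.neg_im,
      Complex.I_re, Complex.I_im, him x, him y] at this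
    linarith
  apply Complex.ext
  · simp only [Complex.conj_re]; linarith
  · simp only [Complex.conj_im]; linarith

theorem block_form_pos_iff_dominated {V : Type*} [AddCommGroup V] [Module ℂ V]
    (α β γ : V →ₗ[ℂ] V →ₗ⋆[ℂ] ℂ)
    (hα : ∀ x, 0 ≤ α x x) (hβ : ∀ x, 0 ≤ β x x) (hγ : ∀ x, 0 ≤ γ x x) :
    (∀ x₁ x₂ : V, 0 ≤ α x₁ x₁ + γ x₂ x₁ + γ x₁ x₂ + β x₂ x₂) ↔
      (∀ x y : V, ‖γ x y‖ ^ 2 ≤ (α x x).re * (β y y).re) := by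
  have hherm := herm_of_pos γ hγ
  constructor
  · intro H x y
    set a := (α x x).re with ha
    set b := (β y y).re with hb
    have ha0 : 0 ≤ a := (Complex.nonneg_iff.mp (hα x)).1
    have hb0 : 0 ≤ b := (Complex.nonneg_iff.mp (hβ y)).1
    set c := γ x y with hc
    by_cases hc0 : c = 0
    · rw [hc0]; simpa using mul_nonneg ha0 hb0
    set r : ℝ := ‖c‖ with hr
    have hr0 : (0:ℝ) < r := by simpa [hr] using (norm_pos_iff.mpr hc0)
    have hrne : ((r:ℂ)) ≠ 0 := by exact_mod_cast ne_of_gt hr0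
    have hcc : c * starRingEnd ℂ c = ((r:ℂ)) ^ 2 := by
      rw [Complex.mul_conj]
      rw [hr, ← Complex.sq_norm]
      push_cast
      ring
    have key : ∀ s : ℝ, 0 ≤ b * (s * s) + (-(2 * r)) * s + a := by
      intro s
      set t : ℂ := (-(s : ℂ)) * (c / (r : ℂ)) with ht
      have hB := H x (t • y)
      simp only [map_smul, LinearMap.smul_apply, LinearMap.map_smulₛₗ, smul_eq_mul] at hB
      have e1 : t * starRingEnd ℂ c = ((-(s * r) : ℝ) : ℂ) := by
        rw [ht]
        field_simp
        push_cast
        linear_combination (-(s:ℂ)) * hcc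
      have e2 : starRingEnd ℂ t * c = ((-(s * r) : ℝ) : ℂ) := by
        rw [ht]
        simp only [map_mul, map_neg, Complex.conj_ofReal, map_div₀]
        field_simp
        push_cast
        linear_combination (-(s:ℂ)) * hcc
      have e3 : starRingEnd ℂ t * t = (((s * s) : ℝ) : ℂ) := by
        rw [ht]
        simp only [map_mul, map_neg, Complex.conj_ofReal, map_div₀]
        field_simp
        push_cast
        linear_combination ((s:ℂ) * (s:ℂ)) * hcc
      have hyx : γ y x = starRingEnd ℂ c := by rw [hc]; exact hherm x y
      have heq : α x x + t * γ y x + starRingEnd ℂ t * γ x y + starRingEnd ℂ t * (t * β y y)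
          = α x x + ((-(s*r):ℝ):ℂ) + ((-(s*r):ℝ):ℂ) + ((s*s : ℝ):ℂ) * β y y := by
        rw [hyx, ← hc, ← mul_assoc, e1, e2, e3]
      have hBe : (0:ℂ) ≤ α x x + ((-(s*r):ℝ):ℂ) + ((-(s*r):ℝ):ℂ) + ((s*s : ℝ):ℂ) * β y y := by
        rw [← heq]; exact hB
      have hre := (Complex.nonneg_iff.mp hBe).1
      simp only [Complex.add_re, Complex.ofReal_re, Complex.re_ofReal_mul] at hre
      rw [← ha, ← hb] at hre
      linarith
    have hdisc := discrim_le_zero key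
    rw [discrim] at hdisc
    nlinarith [hdisc]
  · intro H x₁ x₂
    have ha0 : 0 ≤ (α x₁ x₁).re := (Complex.nonneg_iff.mp (hα x₁)).1
    have hb0 : 0 ≤ (β x₂ x₂).re := (Complex.nonneg_iff.mp (hβ x₂)).1
    have haim : (α x₁ x₁).im = 0 := ((Complex.nonneg_iff.mp (hα x₁)).2).symm
    have hbim : (β x₂ x₂).im = 0 := ((Complex.nonneg_iff.mp (hβ x₂)).2).symm
    have hsum : γ x₂ x₁ = starRingEnd ℂ (γ x₁ x₂) := hherm x₁ x₂
    rw [Complex.nonneg_iff]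
    constructor
    · simp only [Complex.add_re, hsum, Complex.conj_re]
      have h1 := H x₁ x₂
      have hre : -(‖γ x₁ x₂‖) ≤ (γ x₁ x₂).re := by
        have h := abs_le.mp (Complex.abs_re_le_norm (γ x₁ x₂))
        linarith [h.1]
      have hG : ‖γ x₁ x₂‖ ≤
          Real.sqrt (α x₁ x₁).re * Real.sqrt (β x₂ x₂).re := by
        calc ‖γ x₁ x₂‖ = Real.sqrt (‖γ x₁ x₂‖ ^ 2) :=
              (Real.sqrt_sq (norm_nonneg _)).symm
          _ ≤ Real.sqrt ((α x₁ x₁).re * (β x₂ x₂).re) := Real.sqrt_le_sqrt h1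
          _ = Real.sqrt (α x₁ x₁).re * Real.sqrt (β x₂ x₂).re := Real.sqrt_mul ha0 _
      nlinarith [Real.sq_sqrt ha0, Real.sq_sqrt hb0,
        sq_nonneg (Real.sqrt (α x₁ x₁).re - Real.sqrt (β x₂ x₂).re), hG, hre]
    · simp [Complex.add_im, hsum, Complex.conj_im, haim, hbim]
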